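/- Let w ∈ ^{δ(J)}W and let (J_n, w_n)_{n≥0} be the associated sequences. Then for every n ≥ 0 we have w_n ∈ ^{δ(J_n)}W^{J_n}, and for every n ≥ 1 we have w_n ∈ w_{n−1} W_{J_{n−1}}. -/

import Mathlib

/-!
Bédard's sequences attached to `w ∈ {}^{δ(J)}W` (Lusztig, "Nonsplit Hecke algebras and
perverse sheaves", §1.3).  STATEMENT 1: each `w_n` lies in `{}^{δ(J_n)}W^{J_n}`, and
`w_n ∈ w_{n-1} W_{J_{n-1}}` for `n ≥ 1`.
-/

namespace BedardAux

open CoxeterSystem List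

open scoped Classical

variable {B W : Type*} [Group W] {M : CoxeterMatrix B} (cs : CoxeterSystem M W)

local prefix:100 "s" => cs.simple
local prefix:100 "π" => cs.wordProd
local prefix:100 "ℓ" => cs.length

section GroupAux

variable {G : Type*} [Group G] {p q : G} (hp : p * p = 1) (hq : q * q = 1)

theorem conj_eq_iff (g x y : G) : g * x * g⁻¹ = y ↔ x = g⁻¹ * y * g := by
  constructor
  · intro h; rw [← h]; group
  · intro h; rw [h]; group

include hp hq

theorem aux_L1 (r : ℕ) : q * (p * q) ^ r = ((p * q) ^ r)⁻¹ * q := by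
  have hpi : p⁻¹ = p := inv_eq_of_mul_eq_one_right hp
  have hqi : q⁻¹ = q := inv_eq_of_mul_eq_one_right hq
  induction r with
  | zero => simp
  | succ r ih =>
    have base : q * (p * q) = (p * q)⁻¹ * q := by
      rw [mul_inv_rev, hpi, hqi]; group
    calc q * (p * q) ^ (r + 1) = (q * (p * q) ^ r) * (p * q) := by rw [pow_succ, mul_assoc]
    _ = (((p * q) ^ r)⁻¹ * q) * (p * q) := by rw [ih]
    _ = ((p * q) ^ r)⁻¹ * ((p * q)⁻¹ * q) := by rw [mul_assoc, base]
    _ = ((p * q) ^ (r + 1))⁻¹ * q := by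
      rw [pow_succ']
      simp only [mul_inv_rev, mul_assoc]

theorem aux_L2 (k : ℕ) :
    ((p * q) ^ k)⁻¹ * q * (p * q) ^ k = ((p * q) ^ (2 * k))⁻¹ * q := by
  rw [two_mul, pow_add, mul_inv_rev]
  simp only [mul_assoc]
  rw [aux_L1 hp hq]

theorem aux_L3 (k : ℕ) :
    ((p * q) ^ k)⁻¹ * (q * p * q) * (p * q) ^ k = ((p * q) ^ (2 * k + 1))⁻¹ * q := by
  have hpi : p⁻¹ = p := inv_eq_of_mul_eq_one_right hp
  have hqi : q⁻¹ = q := inv_eq_of_mul_eq_one_right hq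
  have h1 : q * p * q = (p * q)⁻¹ * q := by rw [mul_inv_rev, hpi, hqi]
  have hpow : (p * q) ^ (2 * k + 1) = (p * q) ^ k * (p * q) * (p * q) ^ k := by
    rw [show 2 * k + 1 = k + 1 + k by ring, pow_add, pow_succ]
  calc ((p * q) ^ k)⁻¹ * (q * p * q) * (p * q) ^ k
      = ((p * q) ^ k)⁻¹ * ((p * q)⁻¹ * q) * (p * q) ^ k := by rw [h1]
  _ = ((p * q) ^ k)⁻¹ * ((p * q)⁻¹ * (q * (p * q) ^ k)) := by simp only [mul_assoc]
  _ = ((p * q) ^ k)⁻¹ * ((p * q)⁻¹ * (((p * q) ^ k)⁻¹ * q)) := by rw [aux_L1 hp hq]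
  _ = ((p * q) ^ (2 * k + 1))⁻¹ * q := by
      rw [hpow]
      simp only [mul_inv_rev, mul_assoc]

theorem aux_conj2 (X : G) : p * (q * X * q) * p = (p * q) * X * (p * q)⁻¹ := by
  have hpi : p⁻¹ = p := inv_eq_of_mul_eq_one_right hp
  have hqi : q⁻¹ = q := inv_eq_of_mul_eq_one_right hq
  rw [mul_inv_rev, hpi, hqi]
  group

end GroupAux

noncomputable def titsFun (i : B) : (W × ℤˣ) → (W × ℤˣ) :=
  fun x => (s i * x.1 * s i, if x.1 = s i then -x.2 else x.2)

theorem simple_conj_eq_iff (i : B) (t : W) : s i * t * s i = s i ↔ t = s i := by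
  constructor
  · intro h
    have h2 : t * s i = 1 := by
      apply mul_left_cancel (a := s i)
      rw [mul_one, ← mul_assoc]; exact h
    calc t = t * s i * s i := by rw [mul_assoc, cs.simple_mul_simple_self, mul_one]
    _ = s i := by rw [h2, one_mul]
  · rintro rfl; rw [cs.simple_mul_simple_self, one_mul]

theorem titsFun_involutive (i : B) : Function.Involutive (titsFun cs i) := by
  rintro ⟨t, ε⟩
  simp only [titsFun]
  have h1 : s i * (s i * t * s i) * s i = t := by
    rw [show s i * (s i * t * s i) * s i = (s i * s i) * t * (s i * s i) by group,
      cs.simple_mul_simple_self, one_mul, mul_one]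
  refine Prod.ext h1 ?_
  by_cases ht : t = s i
  · subst ht
    rw [if_pos rfl, if_pos ((simple_conj_eq_iff cs i _).mpr rfl), neg_neg]
  · rw [if_neg ht, if_neg (fun h => ht ((simple_conj_eq_iff cs i t).mp h))]

noncomputable def titsPerm (i : B) : Equiv.Perm (W × ℤˣ) :=
  (titsFun_involutive cs i).toPerm _

theorem titsPerm_apply (i : B) (x : W × ℤˣ) : titsPerm cs i x = titsFun cs i x := rfl

theorem titsPerm_pow (i i' : B) (k : ℕ) (t : W) (ε : ℤˣ) :
    ((titsPerm cs i * titsPerm cs i') ^ k) (t, ε) =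
      ((s i * s i') ^ k * t * ((s i * s i') ^ k)⁻¹,
        (∏ n ∈ Finset.range (2 * k),
          if t = ((s i * s i') ^ n)⁻¹ * s i' then (-1 : ℤˣ) else 1) * ε) := by
  have hp : s i * s i = 1 := cs.simple_mul_simple_self i
  have hq : s i' * s i' = 1 := cs.simple_mul_simple_self i'
  induction k with
  | zero => simp
  | succ k ih =>
    rw [pow_succ' (titsPerm cs i * titsPerm cs i') k, Equiv.Perm.mul_apply, ih,
      Equiv.Perm.mul_apply, titsPerm_apply, titsPerm_apply]
    simp only [titsFun]
    have hcond1 : ((s i * s i') ^ k * t * ((s i * s i') ^ k)⁻¹ = s i') ↔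
        (t = ((s i * s i') ^ (2 * k))⁻¹ * s i') := by
      rw [conj_eq_iff, aux_L2 hp hq]
    have hcond2 : (s i' * ((s i * s i') ^ k * t * ((s i * s i') ^ k)⁻¹) * s i' = s i) ↔
        (t = ((s i * s i') ^ (2 * k + 1))⁻¹ * s i') := by
      have hq' : (s i')⁻¹ = s i' := inv_eq_of_mul_eq_one_right hq
      rw [← aux_L3 hp hq]
      constructor
      · intro h
        have hX : (s i * s i') ^ k * t * (((s i * s i') ^ k))⁻¹ = s i' * s i * s i' := by
          calc (s i * s i') ^ k * t * (((s i * s i') ^ k))⁻¹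
              = (s i')⁻¹ * (s i' * ((s i * s i') ^ k * t * ((s i * s i') ^ k)⁻¹) * s i')
                * (s i')⁻¹ := by group
          _ = (s i')⁻¹ * s i * (s i')⁻¹ := by rw [h]
          _ = s i' * s i * s i' := by rw [hq']
        exact (conj_eq_iff _ _ _).mp hX
      · intro h
        have hX : (s i * s i') ^ k * t * (((s i * s i') ^ k))⁻¹ = s i' * s i * s i' :=
          (conj_eq_iff _ _ _).mpr h
        rw [hX]
        calc s i' * (s i' * s i * s i') * s i'
            = (s i' * s i') * s i * (s i' * s i') := by group
        _ = s i := by rw [hq, one_mul, mul_one]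
    refine Prod.ext ?_ ?_
    · simp only
      rw [aux_conj2 hp hq, pow_succ']
      simp only [mul_inv_rev, mul_assoc]
    · simp only
      rw [show 2 * (k + 1) = 2 * k + 1 + 1 by ring, Finset.prod_range_succ,
        Finset.prod_range_succ, hcond1, hcond2]
      split_ifs <;> simp [mul_comm, mul_assoc, mul_left_comm]

theorem titsLiftable : CoxeterMatrix.IsLiftable M (fun i => titsPerm cs i) := by
  intro i i'
  apply Equiv.ext
  rintro ⟨t, ε⟩
  rw [titsPerm_pow, cs.simple_mul_simple_pow i i']
  have hprod : (∏ n ∈ Finset.range (2 * M i i'),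
      if t = ((s i * s i') ^ n)⁻¹ * s i' then (-1 : ℤˣ) else 1) = 1 := by
    rw [two_mul, Finset.prod_range_add]
    have hper : ∀ n : ℕ, ((s i * s i') ^ (M i i' + n))⁻¹ = ((s i * s i') ^ n)⁻¹ := by
      intro n
      rw [pow_add, cs.simple_mul_simple_pow i i', one_mul]
    simp only [hper]
    exact Int.units_mul_self _
  rw [hprod]
  simp

noncomputable def tits : W →* Equiv.Perm (W × ℤˣ) :=
  cs.lift ⟨fun i => titsPerm cs i, titsLiftable cs⟩

theorem tits_simple (i : B) : tits cs (s i) = titsPerm cs i :=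
  cs.lift_apply_simple (titsLiftable cs) i

/-- The sign character attached to a list of elements and a target `t`. -/
noncomputable def listSign (t : W) (l : List W) : ℤˣ :=
  (l.map (fun u => if t = u then (-1 : ℤˣ) else 1)).prod

theorem listSign_cons (t : W) (u : W) (l : List W) :
    listSign t (u :: l) = (if t = u then (-1 : ℤˣ) else 1) * listSign t l := by
  simp [listSign]

theorem listSign_eq_one_of_not_mem (t : W) (l : List W) (h : t ∉ l) : listSign t l = 1 := by
  apply List.prod_eq_one
  intro x hx
  rw [List.mem_map] at hx
  obtain ⟨u, hu, rfl⟩ := hx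
  by_cases hc : t = u
  · subst hc; exact absurd hu h
  · rw [if_neg hc]

theorem mem_of_listSign_ne_one (t : W) (l : List W) (h : listSign t l ≠ 1) : t ∈ l := by
  by_contra hc
  exact h (listSign_eq_one_of_not_mem t l hc)

theorem tits_wordProd (ω : List B) (t : W) (ε : ℤˣ) :
    tits cs (π ω) (t, ε) =
      (π ω * t * (π ω)⁻¹, listSign t (cs.rightInvSeq ω) * ε) := by
  induction ω with
  | nil => simp [listSign]
  | cons i ω ih =>
    rw [cs.wordProd_cons, map_mul, Equiv.Perm.mul_apply, ih, tits_simple, titsPerm_apply]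
    simp only [titsFun]
    have hris : cs.rightInvSeq (i :: ω) = ((π ω)⁻¹ * s i * π ω) :: cs.rightInvSeq ω := rfl
    have hcond : (π ω * t * (π ω)⁻¹ = s i) ↔ (t = (π ω)⁻¹ * s i * π ω) := by
      rw [conj_eq_iff, mul_assoc]
    refine Prod.ext ?_ ?_
    · simp only [mul_inv_rev, cs.inv_simple, mul_assoc]
    · simp only [hris, listSign_cons, hcond]
      split_ifs <;> simp [mul_comm, mul_assoc, mul_left_comm]

theorem tits_apply_snd (w : W) (t : W) : ∃ μ : ℤˣ, ∀ ε : ℤˣ,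
    tits cs w (t, ε) = (w * t * w⁻¹, μ * ε) := by
  obtain ⟨ω, _, rfl⟩ := cs.exists_reduced_word' w
  exact ⟨listSign t (cs.rightInvSeq ω), fun ε => tits_wordProd cs ω t ε⟩

theorem tits_reflection (t : W) (ht : cs.IsReflection t) (ε : ℤˣ) :
    tits cs t (t, ε) = (t, -ε) := by
  obtain ⟨v, a, rfl⟩ := ht
  set t := v * s a * v⁻¹ with hta
  obtain ⟨μ, hμ⟩ := tits_apply_snd cs v⁻¹ t
  obtain ⟨ν, hν⟩ := tits_apply_snd cs v (s a)
  have hfixed : v⁻¹ * t * v⁻¹⁻¹ = s a := by rw [hta]; group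
  have hback : v * s a * v⁻¹ = t := by rw [hta]
  have hcomp : ∀ δ : ℤˣ, tits cs v (tits cs v⁻¹ (t, δ)) = (t, δ) := by
    intro δ
    rw [← Equiv.Perm.mul_apply, ← map_mul, mul_inv_cancel, map_one, Equiv.Perm.one_apply]
  have hνμ : ν * μ = 1 := by
    have h1 := hcomp 1
    rw [hμ 1, hfixed, hν (μ * 1), hback] at h1
    have := congrArg Prod.snd h1
    simpa using this
  have hstep : tits cs t (t, ε) = (t, ν * (-(μ * ε))) := by
    have hdecomp : (t : W) = v * s a * v⁻¹ := hta
    have happ : titsPerm cs a (s a, μ * ε) = (s a, -(μ * ε)) := by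
      rw [titsPerm_apply]
      simp [titsFun, cs.simple_mul_simple_self]
    nth_rewrite 1 [hdecomp]
    rw [map_mul, map_mul, Equiv.Perm.mul_apply, Equiv.Perm.mul_apply, hμ ε, hfixed,
      tits_simple, happ, hν (-(μ * ε)), hback]
  rw [hstep]
  congr 1
  calc ν * -(μ * ε) = -((ν * μ) * ε) := by simp [mul_assoc]
  _ = -ε := by rw [hνμ, one_mul]

theorem mem_rightInvSeq_of_isRightInversion {ω : List B} (hω : cs.IsReduced ω) {t : W}
    (ht : cs.IsReflection t) (hlt : ℓ (π ω * t) < ℓ (π ω)) : t ∈ cs.rightInvSeq ω := by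
  obtain ⟨ρ, hρred, hρ⟩ := cs.exists_reduced_word' (π ω * t)
  have htt : t * t = 1 := ht.mul_self
  have hw : π ω = π ρ * t := by rw [← hρ, mul_assoc, htt, mul_one]
  have ht_not_mem : t ∉ cs.rightInvSeq ρ := by
    intro hmem
    have := (cs.isRightInversion_of_mem_rightInvSeq hρred hmem).2
    rw [← hρ, mul_assoc, htt, mul_one] at this
    omega
  have hsign1 : tits cs (π ω) (t, 1) = (π ω * t * (π ω)⁻¹, listSign t (cs.rightInvSeq ω)) := by
    have := tits_wordProd cs ω t 1
    rwa [mul_one] at this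
  have hsign2 : tits cs (π ω) (t, 1) = (π ω * t * (π ω)⁻¹, -1) := by
    have hcan : ∀ x : W, t * (t * x) = x := fun x => by rw [← mul_assoc, htt, one_mul]
    rw [hw, map_mul, Equiv.Perm.mul_apply, tits_reflection cs t ht 1, tits_wordProd cs ρ t (-1),
      listSign_eq_one_of_not_mem t _ ht_not_mem, one_mul]
    refine Prod.ext ?_ rfl
    simp only [mul_inv_rev, ht.inv, mul_assoc, hcan]
  have : listSign t (cs.rightInvSeq ω) = -1 := by
    have := hsign1.symm.trans hsign2
    exact (Prod.ext_iff.mp this).2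
  apply mem_of_listSign_ne_one t _
  rw [this]
  decide

/-- Right exchange property, eraseIdx form. -/
theorem right_exchange {ω : List B} (hω : cs.IsReduced ω) {t : W}
    (ht : cs.IsReflection t) (hlt : ℓ (π ω * t) < ℓ (π ω)) :
    ∃ j < ω.length, π ω * t = π (ω.eraseIdx j) := by
  have hmem := mem_rightInvSeq_of_isRightInversion cs hω ht hlt
  obtain ⟨j, hj, hjt⟩ := List.mem_iff_getElem.mp hmem
  rw [cs.length_rightInvSeq] at hj
  refine ⟨j, hj, ?_⟩
  rw [← cs.wordProd_mul_getD_rightInvSeq ω j]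
  congr 1
  rw [← hjt, List.getD_eq_getElem _ 1 (by rw [cs.length_rightInvSeq]; exact hj)]

/-- Left exchange property, eraseIdx form. -/
theorem left_exchange {ω : List B} (hω : cs.IsReduced ω) {t : W}
    (ht : cs.IsReflection t) (hlt : ℓ (t * π ω) < ℓ (π ω)) :
    ∃ j < ω.length, t * π ω = π (ω.eraseIdx j) := by
  have hrev : cs.IsReduced ω.reverse := (cs.isReduced_reverse_iff ω).mpr hω
  have hinv : ℓ (π ω.reverse * t) < ℓ (π ω.reverse) := by
    rw [cs.wordProd_reverse]
    have h1 : ℓ ((π ω)⁻¹ * t) = ℓ (t * π ω) := by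
      rw [← cs.length_inv ((π ω)⁻¹ * t), mul_inv_rev, inv_inv, ht.inv]
    rw [h1, cs.length_inv]
    exact hlt
  have hmem := mem_rightInvSeq_of_isRightInversion cs hrev ht hinv
  rw [cs.rightInvSeq_reverse, List.mem_reverse] at hmem
  obtain ⟨j, hj, hjt⟩ := List.mem_iff_getElem.mp hmem
  rw [cs.length_leftInvSeq] at hj
  refine ⟨j, hj, ?_⟩
  rw [← cs.getD_leftInvSeq_mul_wordProd ω j]
  congr 1
  rw [← hjt, List.getD_eq_getElem _ 1 (by rw [cs.length_leftInvSeq]; exact hj)]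

theorem wordProd_mem_closure {K : Set W} (κ : List B) (hκ : ∀ i ∈ κ, s i ∈ K) :
    π κ ∈ Subgroup.closure K := by
  induction κ with
  | nil => rw [cs.wordProd_nil]; exact Subgroup.one_mem _
  | cons i κ ih =>
    rw [cs.wordProd_cons]
    exact Subgroup.mul_mem _ (Subgroup.subset_closure (hκ i (List.mem_cons_self)))
      (ih (fun j hj => hκ j (List.mem_cons_of_mem i hj)))

theorem exists_word_of_mem_closure {K : Set W} (hK : K ⊆ Set.range cs.simple) {a : W}
    (ha : a ∈ Subgroup.closure K) : ∃ κ : List B, (∀ i ∈ κ, s i ∈ K) ∧ π κ = a := by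
  induction ha using Subgroup.closure_induction with
  | mem x hx =>
    obtain ⟨i, hi⟩ := hK hx
    exact ⟨[i], by simpa [hi] using hx, by simpa using hi⟩
  | one => exact ⟨[], by simp, by simp⟩
  | mul x y hx hy ihx ihy =>
    obtain ⟨κ₁, h1, hp1⟩ := ihx
    obtain ⟨κ₂, h2, hp2⟩ := ihy
    refine ⟨κ₁ ++ κ₂, ?_, by rw [cs.wordProd_append, hp1, hp2]⟩
    intro i hi
    rcases List.mem_append.mp hi with h | h
    · exact h1 i h
    · exact h2 i h
  | inv x hx ihx =>
    obtain ⟨κ, h1, hp⟩ := ihx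
    refine ⟨κ.reverse, ?_, by rw [cs.wordProd_reverse, hp]⟩
    intro i hi
    exact h1 i (List.mem_reverse.mp hi)

theorem exists_prefix_transition (P : ℕ → Prop) (n : ℕ) (h0 : P 0) (hn : ¬P n) :
    ∃ j < n, P j ∧ ¬P (j + 1) := by
  induction n with
  | zero => exact absurd h0 hn
  | succ n ih =>
    by_cases hPn : P n
    · exact ⟨n, Nat.lt_succ_self n, hPn, hn⟩
    · obtain ⟨j, hj, h1, h2⟩ := ih hPn
      exact ⟨j, hj.trans (Nat.lt_succ_self n), h1, h2⟩

theorem exists_reduced_word_in (K : Set W) : ∀ (n : ℕ) (κ : List B), κ.length = n →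
    (∀ i ∈ κ, s i ∈ K) →
    ∃ ρ : List B, (∀ i ∈ ρ, s i ∈ K) ∧ cs.IsReduced ρ ∧ π ρ = π κ := by
  intro n
  induction n using Nat.strong_induction_on with
  | _ n ih =>
    intro κ hlen hκ
    by_cases hred : cs.IsReduced κ
    · exact ⟨κ, hκ, hred, rfl⟩
    · have h0 : cs.IsReduced (κ.take 0) := by simp [CoxeterSystem.IsReduced]
      have hnn : ¬ cs.IsReduced (κ.take κ.length) := by rwa [List.take_length]
      obtain ⟨j, hj, hPj, hPj1⟩ :=
        exists_prefix_transition (fun j => cs.IsReduced (κ.take j)) κ.length h0 hnn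
      have hlentake : (κ.take j).length = j := by
        rw [List.length_take]; omega
      have hlenu : ℓ (π (κ.take j)) = j := by rw [hPj, hlentake]
      have htake : κ.take (j + 1) = κ.take j ++ [κ[j]] := by
        rw [List.take_succ, List.getElem?_eq_getElem hj]
        rfl
      have hprod : π (κ.take (j + 1)) = π (κ.take j) * s (κ[j]) := by
        rw [htake, cs.wordProd_append, cs.wordProd_singleton]
      have hne := cs.length_mul_simple_ne (π (κ.take j)) (κ[j])
      have hlen1 : (κ.take (j + 1)).length = j + 1 := by
        rw [List.length_take]; omega
      have hnotred : ℓ (π (κ.take j) * s (κ[j])) ≠ j + 1 := by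
        intro hcon
        apply hPj1
        unfold CoxeterSystem.IsReduced
        rw [hprod, hlen1, hcon]
      have hcases := cs.length_mul_simple (π (κ.take j)) (κ[j])
      have hlt : ℓ (π (κ.take j) * s (κ[j])) < ℓ (π (κ.take j)) := by
        rw [hlenu] at hne hcases ⊢
        omega
      obtain ⟨j', hj', heq⟩ := right_exchange cs hPj (cs.isReflection_simple (κ[j])) hlt
      set κ₂ := (κ.take j).eraseIdx j' ++ κ.drop (j + 1) with hκ₂
      have hπκ₂ : π κ₂ = π κ := by
        rw [hκ₂, cs.wordProd_append, ← heq, ← hprod]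
        rw [← cs.wordProd_append, List.take_append_drop]
      have herlen : ((κ.take j).eraseIdx j').length + 1 = j := by
        rw [List.length_eraseIdx_add_one hj']
        exact hlentake
      have hκ₂len : κ₂.length < n := by
        rw [hκ₂, List.length_append, List.length_drop]
        omega
      have hκ₂K : ∀ i ∈ κ₂, s i ∈ K := by
        intro i hi
        rcases List.mem_append.mp hi with h | h
        · exact hκ i (List.take_subset j κ (List.eraseIdx_subset h))
        · exact hκ i (List.drop_subset (j + 1) κ h)
      obtain ⟨ρ, hρK, hρred, hρπ⟩ := ih κ₂.length hκ₂len κ₂ rfl hκ₂K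
      exact ⟨ρ, hρK, hρred, by rw [hρπ, hπκ₂]⟩

theorem left_coset_additive {K : Set W} (hK : K ⊆ Set.range cs.simple) (d : W)
    (hmin : ∀ a ∈ Subgroup.closure K, ℓ d ≤ ℓ (a * d)) :
    ∀ a ∈ Subgroup.closure K, ℓ (a * d) = ℓ a + ℓ d := by
  suffices H : ∀ n : ℕ, ∀ a ∈ Subgroup.closure K, ℓ a = n → ℓ (a * d) = ℓ a + ℓ d by
    exact fun a ha => H (ℓ a) a ha rfl
  intro n
  induction n using Nat.strong_induction_on with
  | _ n ih =>
    intro a ha hn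
    obtain ⟨κ₀, hκ₀K, hκ₀π⟩ := exists_word_of_mem_closure cs hK ha
    obtain ⟨κ, hκK, hκred, hκπ⟩ := exists_reduced_word_in cs K κ₀.length κ₀ rfl hκ₀K
    rw [hκ₀π] at hκπ
    cases κ with
    | nil =>
      have : a = 1 := by rw [← hκπ, cs.wordProd_nil]
      subst this
      simp
    | cons r κ' =>
      have haeq : a = s r * π κ' := by rw [← hκπ, cs.wordProd_cons]
      have hκ'red : cs.IsReduced κ' := by
        have := hκred.drop 1
        simpa using this
      have hla : ℓ a = κ'.length + 1 := by
        rw [← hκπ]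
        rw [CoxeterSystem.IsReduced] at hκred
        rw [hκred]
        simp
      have hla' : ℓ (π κ') = κ'.length := hκ'red
      have ha' : π κ' ∈ Subgroup.closure K :=
        wordProd_mem_closure cs κ' (fun i hi => hκK i (List.mem_cons_of_mem r hi))
      have hIH : ℓ (π κ' * d) = ℓ (π κ') + ℓ d := by
        refine ih κ'.length (by omega) (π κ') ha' hla'
      have hne := cs.length_simple_mul_ne (π κ' * d) r
      have hcases := cs.length_simple_mul (π κ' * d) r
      rcases hcases with hup | hdown
      · rw [haeq, mul_assoc, hup, hIH, ← haeq, hla, hla']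
        omega
      · exfalso
        obtain ⟨δω, hδred, hδπ⟩ := cs.exists_reduced_word' d
        have hωπ : π (κ' ++ δω) = π κ' * d := by rw [cs.wordProd_append, ← hδπ]
        have hδlen : δω.length = ℓ d := by rw [CoxeterSystem.IsReduced] at hδred; rw [← hδred, ← hδπ]
        have hωred : cs.IsReduced (κ' ++ δω) := by
          unfold CoxeterSystem.IsReduced
          rw [hωπ, hIH, List.length_append, hla', hδlen]
        have hlt : ℓ (s r * π (κ' ++ δω)) < ℓ (π (κ' ++ δω)) := by
          rw [hωπ]
          omega
        obtain ⟨j, hj, heq⟩ := left_exchange cs hωred (cs.isReflection_simple r) hlt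
        rw [hωπ] at heq
        rw [List.length_append] at hj
        by_cases hcase : j < κ'.length
        · rw [List.eraseIdx_append_of_lt_length hcase, cs.wordProd_append, ← hδπ] at heq
          have haeq2 : a = π (κ'.eraseIdx j) := by
            have h2 : (s r * π κ') * d = π (κ'.eraseIdx j) * d := by
              rw [mul_assoc]; exact heq
            have := mul_right_cancel h2
            rw [haeq, this]
          have hlen2 : (κ'.eraseIdx j).length + 1 = κ'.length :=
            List.length_eraseIdx_add_one hcase
          have := cs.length_wordProd_le (κ'.eraseIdx j)
          rw [← haeq2] at this
          omega
        · push_neg at hcase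
          rw [List.eraseIdx_append_of_length_le hcase, cs.wordProd_append] at heq
          set d' := π (δω.eraseIdx (j - κ'.length)) with hd'
          have hd'eq : d' = ((π κ')⁻¹ * s r * π κ') * d := by
            have : (π κ')⁻¹ * (s r * (π κ' * d)) = d' := by rw [heq]; group
            rw [← this]; group
          have hcmem : (π κ')⁻¹ * s r * π κ' ∈ Subgroup.closure K := by
            refine Subgroup.mul_mem _ (Subgroup.mul_mem _ (Subgroup.inv_mem _ ha') ?_) ha'
            exact Subgroup.subset_closure (hκK r (List.mem_cons_self))
          have hmind := hmin _ hcmem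
          rw [← hd'eq] at hmind
          have hd'len := cs.length_wordProd_le (δω.eraseIdx (j - κ'.length))
          rw [← hd'] at hd'len
          have hlen3 : (δω.eraseIdx (j - κ'.length)).length + 1 = δω.length :=
            List.length_eraseIdx_add_one (by omega)
          omega

theorem right_coset_additive {K : Set W} (hK : K ⊆ Set.range cs.simple) (d : W)
    (hmin : ∀ b ∈ Subgroup.closure K, ℓ d ≤ ℓ (d * b)) :
    ∀ b ∈ Subgroup.closure K, ℓ (d * b) = ℓ d + ℓ b := by
  have hmin' : ∀ a ∈ Subgroup.closure K, ℓ d⁻¹ ≤ ℓ (a * d⁻¹) := by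
    intro a ha
    rw [cs.length_inv d, ← cs.length_inv (a * d⁻¹), mul_inv_rev, inv_inv]
    exact hmin a⁻¹ (Subgroup.inv_mem _ ha)
  intro b hb
  have := left_coset_additive cs hK d⁻¹ hmin' b⁻¹ (Subgroup.inv_mem _ hb)
  rw [← cs.length_inv (d * b), mul_inv_rev, this, cs.length_inv, cs.length_inv]
  omega

theorem exists_reduced_word_of_mem_closure {K : Set W} (hK : K ⊆ Set.range cs.simple) {a : W}
    (ha : a ∈ Subgroup.closure K) :
    ∃ κ : List B, (∀ i ∈ κ, s i ∈ K) ∧ cs.IsReduced κ ∧ π κ = a := by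
  obtain ⟨κ₀, h0, hp⟩ := exists_word_of_mem_closure cs hK ha
  obtain ⟨ρ, h1, h2, h3⟩ := exists_reduced_word_in cs K κ₀.length κ₀ rfl h0
  exact ⟨ρ, h1, h2, by rw [h3, hp]⟩

theorem double_coset_additive {K₁ K₂ : Set W} (hK₁ : K₁ ⊆ Set.range cs.simple)
    (hK₂ : K₂ ⊆ Set.range cs.simple) (d : W)
    (hradd : ∀ b ∈ Subgroup.closure K₂, ℓ (d * b) = ℓ d + ℓ b)
    (hdmin : ∀ a ∈ Subgroup.closure K₁, ∀ b ∈ Subgroup.closure K₂, ℓ d ≤ ℓ (a * d * b)) :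
    ∀ a ∈ Subgroup.closure K₁, ∀ b ∈ Subgroup.closure K₂,
      ∃ a' ∈ Subgroup.closure K₁, ∃ b' ∈ Subgroup.closure K₂,
        a * d * b = a' * d * b' ∧ ℓ (a * d * b) = ℓ a' + ℓ d + ℓ b' := by
  suffices H : ∀ n : ℕ, ∀ a ∈ Subgroup.closure K₁, ℓ a = n → ∀ b ∈ Subgroup.closure K₂,
      ∃ a' ∈ Subgroup.closure K₁, ∃ b' ∈ Subgroup.closure K₂,
        a * d * b = a' * d * b' ∧ ℓ (a * d * b) = ℓ a' + ℓ d + ℓ b' by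
    exact fun a ha b hb => H (ℓ a) a ha rfl b hb
  intro n
  induction n using Nat.strong_induction_on with
  | _ n ih =>
    intro a ha hn b hb
    obtain ⟨κ, hκK, hκred, hκπ⟩ := exists_reduced_word_of_mem_closure cs hK₁ ha
    cases κ with
    | nil =>
      have ha1 : a = 1 := by rw [← hκπ, cs.wordProd_nil]
      subst ha1
      refine ⟨1, Subgroup.one_mem _, b, hb, rfl, ?_⟩
      rw [one_mul, hradd b hb, cs.length_one]
      omega
    | cons r κ' =>
      have haeq : a = s r * π κ' := by rw [← hκπ, cs.wordProd_cons]
      have hκ'red : cs.IsReduced κ' := by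
        have := hκred.drop 1
        simpa using this
      have hla : ℓ a = κ'.length + 1 := by
        rw [← hκπ]
        rw [CoxeterSystem.IsReduced] at hκred
        rw [hκred]
        simp
      have hla' : ℓ (π κ') = κ'.length := hκ'red
      have hsrK : s r ∈ K₁ := hκK r (List.mem_cons_self)
      have ha₀ : π κ' ∈ Subgroup.closure K₁ :=
        wordProd_mem_closure cs κ' (fun i hi => hκK i (List.mem_cons_of_mem r hi))
      obtain ⟨a₂, ha₂, b₂, hb₂, heq2, hlen2⟩ := ih κ'.length (by omega) (π κ') ha₀ hla' b hb
      have hxeq : a * d * b = s r * (π κ' * d * b) := by rw [haeq]; group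
      have hne := cs.length_simple_mul_ne (π κ' * d * b) r
      rcases cs.length_simple_mul (π κ' * d * b) r with hup | hdown
      · -- length goes up: prepend the letter to a₂
        have e1 : ℓ (a * d * b) = ℓ (π κ' * d * b) + 1 := by rw [hxeq]; exact hup
        have e2 : a * d * b = (s r * a₂) * d * b₂ := by rw [hxeq, heq2]; group
        have hne₂ := cs.length_simple_mul_ne a₂ r
        rcases cs.length_simple_mul a₂ r with hup₂ | hdown₂
        · refine ⟨s r * a₂, Subgroup.mul_mem _ (Subgroup.subset_closure hsrK) ha₂,
            b₂, hb₂, e2, ?_⟩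
          omega
        · exfalso
          have hle : ℓ (a * d * b) ≤ ℓ (s r * a₂) + ℓ d + ℓ b₂ := by
            rw [e2]
            calc ℓ (s r * a₂ * d * b₂) ≤ ℓ (s r * a₂ * d) + ℓ b₂ := cs.length_mul_le _ _
            _ ≤ ℓ (s r * a₂) + ℓ d + ℓ b₂ := by
                have := cs.length_mul_le (s r * a₂) d
                omega
          omega
      · -- length goes down: use the exchange property
        obtain ⟨κ₂, hκ₂K, hκ₂red, hκ₂π⟩ := exists_reduced_word_of_mem_closure cs hK₁ ha₂
        obtain ⟨β₂, hβ₂K, hβ₂red, hβ₂π⟩ := exists_reduced_word_of_mem_closure cs hK₂ hb₂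
        obtain ⟨δω, hδred, hδπ⟩ := cs.exists_reduced_word' d
        have hκ₂len : κ₂.length = ℓ a₂ := by
          have h := hκ₂red
          rw [CoxeterSystem.IsReduced, hκ₂π] at h
          omega
        have hβ₂len : β₂.length = ℓ b₂ := by
          have h := hβ₂red
          rw [CoxeterSystem.IsReduced, hβ₂π] at h
          omega
        have hδlen : δω.length = ℓ d := by
          have h := hδred
          rw [CoxeterSystem.IsReduced, ← hδπ] at h
          omega
        have hωπ : π (κ₂ ++ (δω ++ β₂)) = a₂ * d * b₂ := by
          rw [cs.wordProd_append, cs.wordProd_append, hκ₂π, ← hδπ, hβ₂π]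
          group
        have hωred : cs.IsReduced (κ₂ ++ (δω ++ β₂)) := by
          unfold CoxeterSystem.IsReduced
          rw [hωπ, ← heq2, List.length_append, List.length_append]
          omega
        have hlt : ℓ (s r * π (κ₂ ++ (δω ++ β₂))) < ℓ (π (κ₂ ++ (δω ++ β₂))) := by
          rw [hωπ, ← heq2]
          omega
        obtain ⟨j, hj, heqx⟩ := left_exchange cs hωred (cs.isReflection_simple r) hlt
        rw [List.length_append, List.length_append] at hj
        have hxeq2 : a * d * b = s r * π (κ₂ ++ (δω ++ β₂)) := by
          rw [hxeq, heq2, hωπ]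
        have hlx : ℓ (a * d * b) + 1 = ℓ a₂ + ℓ d + ℓ b₂ := by
          have e1 : ℓ (a * d * b) + 1 = ℓ (π κ' * d * b) := by rw [hxeq]; exact hdown
          omega
        by_cases hc1 : j < κ₂.length
        · rw [List.eraseIdx_append_of_lt_length hc1] at heqx
          have ha₃eq : a * d * b = π (κ₂.eraseIdx j) * d * b₂ := by
            rw [hxeq2, heqx, cs.wordProd_append, cs.wordProd_append, ← hδπ, hβ₂π]
            group
          have ha₃mem : π (κ₂.eraseIdx j) ∈ Subgroup.closure K₁ :=
            wordProd_mem_closure cs _ (fun i hi => hκ₂K i (List.eraseIdx_subset hi))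
          have ha₃len : (κ₂.eraseIdx j).length + 1 = κ₂.length :=
            List.length_eraseIdx_add_one hc1
          have ha₃le : ℓ (π (κ₂.eraseIdx j)) ≤ (κ₂.eraseIdx j).length :=
            cs.length_wordProd_le _
          have hle : ℓ (a * d * b) ≤ ℓ (π (κ₂.eraseIdx j)) + ℓ d + ℓ b₂ := by
            rw [ha₃eq]
            calc ℓ (π (κ₂.eraseIdx j) * d * b₂) ≤ ℓ (π (κ₂.eraseIdx j) * d) + ℓ b₂ :=
              cs.length_mul_le _ _
            _ ≤ ℓ (π (κ₂.eraseIdx j)) + ℓ d + ℓ b₂ := by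
                have := cs.length_mul_le (π (κ₂.eraseIdx j)) d
                omega
          exact ⟨π (κ₂.eraseIdx j), ha₃mem, b₂, hb₂, ha₃eq, by omega⟩
        · push_neg at hc1
          rw [List.eraseIdx_append_of_length_le hc1] at heqx
          by_cases hc2 : j - κ₂.length < δω.length
          · exfalso
            rw [List.eraseIdx_append_of_lt_length hc2] at heqx
            set d' := π (δω.eraseIdx (j - κ₂.length)) with hd'def
            have heqx2 : s r * (a₂ * d * b₂) = a₂ * (d' * b₂) := by
              rw [← hωπ, heqx, cs.wordProd_append, cs.wordProd_append, hκ₂π, hβ₂π, ← hd'def]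
            have hd'eq : d' = (a₂⁻¹ * s r * a₂) * d := by
              have h3 : d' = a₂⁻¹ * (s r * (a₂ * d * b₂)) * b₂⁻¹ := by
                rw [heqx2]; group
              rw [h3]; group
            have hcm : a₂⁻¹ * s r * a₂ ∈ Subgroup.closure K₁ :=
              Subgroup.mul_mem _ (Subgroup.mul_mem _ (Subgroup.inv_mem _ ha₂)
                (Subgroup.subset_closure hsrK)) ha₂
            have hmind := hdmin _ hcm 1 (Subgroup.one_mem _)
            rw [mul_one, ← hd'eq] at hmind
            have hd'le : ℓ d' ≤ (δω.eraseIdx (j - κ₂.length)).length := by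
              rw [hd'def]; exact cs.length_wordProd_le _
            have hlen4 : (δω.eraseIdx (j - κ₂.length)).length + 1 = δω.length :=
              List.length_eraseIdx_add_one hc2
            omega
          · push_neg at hc2
            rw [List.eraseIdx_append_of_length_le hc2] at heqx
            have hb₃eq : a * d * b =
                a₂ * d * π (β₂.eraseIdx (j - κ₂.length - δω.length)) := by
              rw [hxeq2, heqx, cs.wordProd_append, cs.wordProd_append, hκ₂π, ← hδπ]
              group
            have hb₃mem : π (β₂.eraseIdx (j - κ₂.length - δω.length)) ∈ Subgroup.closure K₂ :=
              wordProd_mem_closure cs _ (fun i hi => hβ₂K i (List.eraseIdx_subset hi))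
            have hb₃len : (β₂.eraseIdx (j - κ₂.length - δω.length)).length + 1 = β₂.length :=
              List.length_eraseIdx_add_one (by omega)
            have hb₃le : ℓ (π (β₂.eraseIdx (j - κ₂.length - δω.length))) ≤
                (β₂.eraseIdx (j - κ₂.length - δω.length)).length := cs.length_wordProd_le _
            have hle : ℓ (a * d * b) ≤
                ℓ a₂ + ℓ d + ℓ (π (β₂.eraseIdx (j - κ₂.length - δω.length))) := by
              rw [hb₃eq]
              calc ℓ (a₂ * d * π (β₂.eraseIdx (j - κ₂.length - δω.length)))
                  ≤ ℓ (a₂ * d) + ℓ (π (β₂.eraseIdx (j - κ₂.length - δω.length))) :=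
                cs.length_mul_le _ _
              _ ≤ _ := by
                  have := cs.length_mul_le a₂ d
                  omega
            exact ⟨a₂, ha₂, _, hb₃mem, hb₃eq, by omega⟩

theorem eq_minimal_mul_of_left_additive {K₁ K₂ : Set W} (hK₁ : K₁ ⊆ Set.range cs.simple)
    (hK₂ : K₂ ⊆ Set.range cs.simple) (d x : W)
    (hradd : ∀ b ∈ Subgroup.closure K₂, ℓ (d * b) = ℓ d + ℓ b)
    (hdmin : ∀ a ∈ Subgroup.closure K₁, ∀ b ∈ Subgroup.closure K₂, ℓ d ≤ ℓ (a * d * b))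
    (hx : ∃ a ∈ Subgroup.closure K₁, ∃ b ∈ Subgroup.closure K₂, x = a * d * b)
    (hxadd : ∀ a ∈ Subgroup.closure K₁, ℓ (a * x) = ℓ a + ℓ x) :
    ∃ b' ∈ Subgroup.closure K₂, x = d * b' := by
  obtain ⟨a, ha, b, hb, rfl⟩ := hx
  obtain ⟨a', ha', b', hb', heq, hlen⟩ :=
    double_coset_additive cs hK₁ hK₂ d hradd hdmin a ha b hb
  have h2 : a'⁻¹ * (a * d * b) = d * b' := by rw [heq]; group
  have h3 : ℓ (a'⁻¹ * (a * d * b)) = ℓ a' + ℓ (a * d * b) := by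
    rw [hxadd a'⁻¹ (Subgroup.inv_mem _ ha'), cs.length_inv]
  have h4 : ℓ (d * b') ≤ ℓ d + ℓ b' := cs.length_mul_le _ _
  have h5 : a' = 1 := by
    rw [h2] at h3
    have : ℓ a' = 0 := by omega
    exact cs.length_eq_zero_iff.mp this
  exact ⟨b', hb', by rw [heq, h5, one_mul]⟩

end BedardAux

theorem bedard_sequences_minimal_coset_properties
    {B W : Type*} [Finite B] [Group W] {M : CoxeterMatrix B}
    (cs : CoxeterSystem M W) (δ : W ≃* W)
    (hδ : ⇑δ '' Set.range cs.simple = Set.range cs.simple)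
    (J : Set W) (hJ : J ⊆ Set.range cs.simple)
    (w : W)
    (hw : ∀ a ∈ Subgroup.closure (⇑δ '' J),
      cs.length (a * w) = cs.length a + cs.length w)
    (Jn : ℕ → Set W) (wn : ℕ → W)
    (hJ0 : Jn 0 = J)
    (hJrec : ∀ n : ℕ,
      Jn (n + 1) = Jn n ∩ ⇑δ.symm '' {x : W | ∃ s ∈ Jn n, x = wn n * s * (wn n)⁻¹})
    (hwn : ∀ n : ℕ,
      wn n ∈ {x : W | ∃ a ∈ Subgroup.closure (⇑δ '' J),
        ∃ b ∈ Subgroup.closure (Jn n), x = a * w * b} ∧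
      ∀ x ∈ {x : W | ∃ a ∈ Subgroup.closure (⇑δ '' J),
        ∃ b ∈ Subgroup.closure (Jn n), x = a * w * b},
        cs.length (wn n) ≤ cs.length x) :
    (∀ n : ℕ,
      (∀ a ∈ Subgroup.closure (⇑δ '' Jn n),
        cs.length (a * wn n) = cs.length a + cs.length (wn n)) ∧
      (∀ a ∈ Subgroup.closure (Jn n),
        cs.length (wn n * a) = cs.length (wn n) + cs.length a)) ∧
    (∀ n : ℕ, ∃ b ∈ Subgroup.closure (Jn n), wn (n + 1) = wn n * b) := by
  classical
  have hKrange : (⇑δ '' J) ⊆ Set.range cs.simple := by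
    rw [← hδ]; exact Set.image_mono hJ
  have hJn_subJ : ∀ n, Jn n ⊆ J := by
    intro n
    induction n with
    | zero => rw [hJ0]
    | succ n ih => rw [hJrec n]; exact Set.inter_subset_left.trans ih
  have hJnrange : ∀ n, Jn n ⊆ Set.range cs.simple := fun n => (hJn_subJ n).trans hJ
  have hmem : ∀ n, ∃ a ∈ Subgroup.closure (⇑δ '' J), ∃ b ∈ Subgroup.closure (Jn n),
      wn n = a * w * b := fun n => (hwn n).1
  have hmin : ∀ n, ∀ a ∈ Subgroup.closure (⇑δ '' J), ∀ b ∈ Subgroup.closure (Jn n),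
      cs.length (wn n) ≤ cs.length (a * w * b) :=
    fun n a ha b hb => (hwn n).2 _ ⟨a, ha, b, hb, rfl⟩
  have hleftmin : ∀ n, ∀ a ∈ Subgroup.closure (⇑δ '' J),
      cs.length (wn n) ≤ cs.length (a * wn n) := by
    intro n a ha
    obtain ⟨a₀, ha₀, b₀, hb₀, hw0⟩ := hmem n
    have h : a * wn n = (a * a₀) * w * b₀ := by rw [hw0]; group
    rw [h]
    exact hmin n _ (Subgroup.mul_mem _ ha ha₀) _ hb₀
  have hrightmin : ∀ n, ∀ b ∈ Subgroup.closure (Jn n),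
      cs.length (wn n) ≤ cs.length (wn n * b) := by
    intro n b hb
    obtain ⟨a₀, ha₀, b₀, hb₀, hw0⟩ := hmem n
    have h : wn n * b = a₀ * w * (b₀ * b) := by rw [hw0]; group
    rw [h]
    exact hmin n _ ha₀ _ (Subgroup.mul_mem _ hb₀ hb)
  have hleftAdd : ∀ n, ∀ a ∈ Subgroup.closure (⇑δ '' J),
      cs.length (a * wn n) = cs.length a + cs.length (wn n) :=
    fun n => BedardAux.left_coset_additive cs hKrange (wn n) (hleftmin n)
  have hrightAdd : ∀ n, ∀ b ∈ Subgroup.closure (Jn n),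
      cs.length (wn n * b) = cs.length (wn n) + cs.length b :=
    fun n => BedardAux.right_coset_additive cs (hJnrange n) (wn n) (hrightmin n)
  constructor
  · intro n
    refine ⟨fun a ha => ?_, hrightAdd n⟩
    exact hleftAdd n a (Subgroup.closure_mono (Set.image_mono (hJn_subJ n)) ha)
  · intro n
    have hJn1_sub : Jn (n + 1) ⊆ Jn n := by rw [hJrec n]; exact Set.inter_subset_left
    obtain ⟨a₁, ha₁, b₁, hb₁, hw1⟩ := hmem (n + 1)
    obtain ⟨a₀, ha₀, b₀, hb₀, hw0⟩ := hmem n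
    have hb₁' : b₁ ∈ Subgroup.closure (Jn n) := Subgroup.closure_mono hJn1_sub hb₁
    have hx : ∃ a ∈ Subgroup.closure (⇑δ '' J), ∃ b ∈ Subgroup.closure (Jn n),
        wn (n + 1) = a * wn n * b := by
      refine ⟨a₁ * a₀⁻¹, Subgroup.mul_mem _ ha₁ (Subgroup.inv_mem _ ha₀),
        b₀⁻¹ * b₁, Subgroup.mul_mem _ (Subgroup.inv_mem _ hb₀) hb₁', ?_⟩
      rw [hw1, hw0]
      group
    have hdmin : ∀ a ∈ Subgroup.closure (⇑δ '' J), ∀ b ∈ Subgroup.closure (Jn n),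
        cs.length (wn n) ≤ cs.length (a * wn n * b) := by
      intro a ha b hb
      have h : a * wn n * b = (a * a₀) * w * (b₀ * b) := by rw [hw0]; group
      rw [h]
      exact hmin n _ (Subgroup.mul_mem _ ha ha₀) _ (Subgroup.mul_mem _ hb₀ hb)
    exact BedardAux.eq_minimal_mul_of_left_additive cs hKrange (hJnrange n) (wn n) (wn (n + 1))
      (hrightAdd n) hdmin hx (hleftAdd (n + 1))
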